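/- Let a, b ∈ B = {0,1}×{0,1} with a = (a^bt, a^ph), b = (b^bt, b^ph), and suppose a^bt = 0. Write z̄ = 1 − z for z ∈ {0,1}. Let S be the linear isomorphism of (ℂ²)^{⊗4} that permutes the four tensor factors from order (1,2,3,4) to order (2,3,1,4). Then S(|φ_{a^bt}^{a^ph}⟩ ⊗ |φ_{b^bt}^{b^ph}⟩) = (1/(2√2)) [ |φ_0^0⟩ ⊗ (|0, b^bt⟩ + (−1)^{a^ph + b^ph} |1, b̄^bt⟩) + |φ_0^1⟩ ⊗ (|0, b^bt⟩ + (−1)^{a^ph + b^ph + 1} |1, b̄^bt⟩) + (−1)^{b^ph} |φ_1^0⟩ ⊗ (|0, b̄^bt⟩ + (−1)^{a^ph + b^ph} |1, b^bt⟩) + (−1)^{b^ph} |φ_1^1⟩ ⊗ (|0, b̄^bt⟩ + (−1)^{a^ph + b^ph + 1} |1, b^bt⟩) ]. -/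
import Mathlib


open TensorProduct

/-- The single-qubit space ℂ². -/
abbrev V : Type := ZMod 2 → ℂ

/-- Standard basis vector |x⟩ of ℂ². -/
noncomputable def ket (x : ZMod 2) : V := fun i => if i = x then 1 else 0

/-- The Bell state |φ_x^y⟩ = (|0⟩⊗|x⟩ + (−1)^y |1⟩⊗|1−x⟩)/√2. -/
noncomputable def bell (x y : ZMod 2) : TensorProduct ℂ V V :=
  ((Real.sqrt 2 : ℂ))⁻¹ •
    (ket 0 ⊗ₜ[ℂ] ket x + ((-1 : ℂ)) ^ (y.val) • ket 1 ⊗ₜ[ℂ] ket (1 - x))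

/-- The four-qubit space (ℂ²)^{⊗4}, grouped as (ℂ²⊗ℂ²)⊗(ℂ²⊗ℂ²). -/
abbrev W : Type := TensorProduct ℂ (TensorProduct ℂ V V) (TensorProduct ℂ V V)

set_option maxHeartbeats 2000000 in
/-- the Bell-swap expansion of S(|φ_a⟩⊗|φ_b⟩) when a^bt = 0,
where S permutes the four tensor factors from order (1,2,3,4) to (2,3,1,4). -/
theorem stmt5 (a b : ZMod 2 × ZMod 2) (ha : a.1 = 0)
    (S : W ≃ₗ[ℂ] W)
    (hS : ∀ v1 v2 v3 v4 : V,
      S ((v1 ⊗ₜ[ℂ] v2) ⊗ₜ[ℂ] (v3 ⊗ₜ[ℂ] v4)) = (v2 ⊗ₜ[ℂ] v3) ⊗ₜ[ℂ] (v1 ⊗ₜ[ℂ] v4)) :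
    S (bell a.1 a.2 ⊗ₜ[ℂ] bell b.1 b.2)
      = ((2 * Real.sqrt 2 : ℝ) : ℂ)⁻¹ •
        ( bell 0 0 ⊗ₜ[ℂ]
            (ket 0 ⊗ₜ[ℂ] ket b.1
              + ((-1 : ℂ)) ^ (a.2.val + b.2.val) • ket 1 ⊗ₜ[ℂ] ket (1 - b.1))
        + bell 0 1 ⊗ₜ[ℂ]
            (ket 0 ⊗ₜ[ℂ] ket b.1
              + ((-1 : ℂ)) ^ (a.2.val + b.2.val + 1) • ket 1 ⊗ₜ[ℂ] ket (1 - b.1))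
        + ((-1 : ℂ)) ^ (b.2.val) •
            (bell 1 0 ⊗ₜ[ℂ]
              (ket 0 ⊗ₜ[ℂ] ket (1 - b.1)
                + ((-1 : ℂ)) ^ (a.2.val + b.2.val) • ket 1 ⊗ₜ[ℂ] ket b.1))
        + ((-1 : ℂ)) ^ (b.2.val) •
            (bell 1 1 ⊗ₜ[ℂ]
              (ket 0 ⊗ₜ[ℂ] ket (1 - b.1)
                + ((-1 : ℂ)) ^ (a.2.val + b.2.val + 1) • ket 1 ⊗ₜ[ℂ] ket b.1))) := by

  obtain ⟨a1,a2⟩ := a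
  obtain ⟨b1,b2⟩ := b
  simp only at ha
  subst ha
  have hz : ∀ z : ZMod 2, z = 0 ∨ z = 1 := by decide
  set r : ℂ := ((Real.sqrt 2 : ℝ) : ℂ) with hr
  have hs : r * r = 2 := by
    rw [hr, ← Complex.ofReal_mul, Real.mul_self_sqrt (by norm_num)]
    norm_num
  have hs0 : r ≠ 0 := by
    intro h; rw [h] at hs; simp at hs
  have hr2 : r ^ 2 = 2 := by rw [sq]; exact hs
  have hinv : r⁻¹ = 2⁻¹ * r := by
    apply inv_eq_of_mul_eq_one_right
    rw [show r * (2⁻¹ * r) = 2⁻¹ * (r * r) from by ring, hs]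
    norm_num
  have hr3 : r ^ 3 = 2 * r := by rw [pow_succ, hr2]
  rcases hz a2 with rfl | rfl <;> rcases hz b1 with rfl | rfl <;> rcases hz b2 with rfl | rfl <;>
  · simp only [bell, show (1-(0:ZMod 2))=1 from by decide, show (1-(1:ZMod 2))=0 from by decide,
      ZMod.val_zero, ZMod.val_one, pow_zero, pow_one, one_smul, pow_succ, pow_add]
    simp only [smul_add, tmul_add, add_tmul, ← smul_tmul', tmul_smul, smul_smul]
    simp only [LinearEquiv.map_add, LinearEquiv.map_smul, hS,
      Complex.ofReal_mul, Complex.ofReal_ofNat, mul_inv]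
    match_scalars <;>
    · try simp only [hinv]
      ring_nf
      try simp only [hr2, hr3]
      try ring
      try norm_num
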